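/- Let T and S be unbounded operators on a Hilbert space H with common dense domain V, T V ⊆ V, and ⟨Tα, β⟩ = ⟨α, Sβ⟩ for all α, β ∈ V. Let W be the completion of V under the graph norm ‖α‖_W² = ‖α‖² + ‖Tα‖², defining the minimal closure T_min of T with domain W, and let S_max be the maximal closed extension of S (with domain all α ∈ H such that φ ↦ ⟨α, Tφ⟩ is bounded on V). Then the Friedrichs extension Δ of the nonnegative symmetric operator ST equals the composition S_max ∘ T_min; in particular their domains coincide. -/

import Mathlib

/-!
STATEMENT 1: `T, S` unbounded operators with common dense domain `V`, `T V ⊆ V`,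
`⟪Tα, β⟫ = ⟪α, Sβ⟫`.  `T_min = Tp.closure` is the graph-norm closure of `T`, and
`S_max = Tp†` is the maximal extension of `S` (domain: all `α` such that
`φ ↦ ⟪α, Tφ⟫` is bounded, value given by Riesz representation).  The Friedrichs
extension `Δ` of `ST` is described by its graph (from the form construction:
`Δ x = y` iff `x ∈ Dom(T_min)` and `⟪T_min x, T_min φ⟫ = ⟪y, φ⟫` for all
`φ ∈ Dom(T_min)`, since the form norm `‖·‖₁` equals the graph norm of `T`).
The theorem: the Friedrichs extension equals `S_max ∘ T_min`; in particular the
domains coincide.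
-/

open scoped RealInnerProductSpace
open LinearPMap

theorem friedrichs_extension_eq_smax_comp_tmin
    {H : Type*} [NormedAddCommGroup H] [InnerProductSpace ℝ H] [CompleteSpace H]
    (V : Submodule ℝ H) (hdense : Dense (V : Set H))
    (T S : V →ₗ[ℝ] H)
    (hTV : ∀ v : V, T v ∈ V)
    (hadj : ∀ α β : V, ⟪T α, (β : H)⟫ = ⟪(α : H), S β⟫)
    (Tp : H →ₗ.[ℝ] H) (hTp : Tp = ⟨V, T⟩) :
    ∀ x y : H,
      -- `x ∈ Dom Δ` and `Δ x = y` for the Friedrichs extension `Δ` of `S ∘ T` ...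
      ((∃ hx : x ∈ Tp.closure.domain,
          ∀ φ : Tp.closure.domain,
            ⟪Tp.closure ⟨x, hx⟩, Tp.closure φ⟫ = ⟪y, (φ : H)⟫)
        ↔ -- ... if and only if `x ∈ Dom (S_max ∘ T_min)` and `(S_max ∘ T_min) x = y`.
          (∃ hx : x ∈ Tp.closure.domain,
            ∃ h2 : Tp.closure ⟨x, hx⟩ ∈ (Tp†).domain,
              Tp† ⟨Tp.closure ⟨x, hx⟩, h2⟩ = y)) := by
  subst hTp
  set Tp : H →ₗ.[ℝ] H := ⟨V, T⟩ with hTpdef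
  have hdom : Dense (Tp.domain : Set H) := hdense
  -- membership in the closure of the graph gives the formal adjoint identity
  have key : ∀ p ∈ closure (Tp.graph : Set (H × H)), ∀ β : V,
      ⟪p.2, (β : H)⟫ = ⟪p.1, S β⟫ := by
    intro p hp β
    have hcl : IsClosed {q : H × H | ⟪q.2, (β : H)⟫ = ⟪q.1, S β⟫} := by
      apply isClosed_eq
      · exact (continuous_inner.comp ((continuous_snd).prodMk continuous_const))
      · exact (continuous_inner.comp ((continuous_fst).prodMk continuous_const))
    have hsub : (Tp.graph : Set (H × H)) ⊆ {q : H × H | ⟪q.2, (β : H)⟫ = ⟪q.1, S β⟫} := by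
      rintro q hq
      rw [SetLike.mem_coe, LinearPMap.mem_graph_iff] at hq
      obtain ⟨α, h1, h2⟩ := hq
      simp only [Set.mem_setOf_eq, ← h1, ← h2]
      exact hadj α β
    exact closure_minimal hsub hcl hp
  -- closability of Tp
  have hg : ∀ (q : H × H) (_ : q ∈ Tp.graph.topologicalClosure) (_ : q.fst = 0),
      q.snd = 0 := by
    intro q hq hq0
    have hq' : q ∈ closure (Tp.graph : Set (H × H)) := hq
    refine hdense.eq_zero_of_inner_left ℝ fun b hb => ?_
    obtain ⟨β, rfl⟩ : ∃ β : V, (β : H) = b := ⟨⟨b, hb⟩, rfl⟩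
    rw [key q hq' β, hq0, inner_zero_left]
  have hclosable : Tp.IsClosable :=
    ⟨Tp.graph.topologicalClosure.toLinearPMap,
      (Submodule.toLinearPMap_graph_eq _ hg).symm⟩
  have hgraph : Tp.closure.graph = Tp.graph.topologicalClosure :=
    hclosable.graph_closure_eq_closure_graph.symm
  have hmemcl : ∀ φ : Tp.closure.domain,
      ((φ : H), Tp.closure φ) ∈ closure (Tp.graph : Set (H × H)) := by
    intro φ
    have h : ((φ : H), Tp.closure φ) ∈ Tp.closure.graph := Tp.closure.mem_graph φ
    rw [hgraph] at h
    exact h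
  intro x y
  constructor
  · rintro ⟨hx, h⟩
    refine ⟨hx, ?_⟩
    set z := Tp.closure ⟨x, hx⟩ with hz
    have hzy : ∀ α : Tp.domain, ⟪y, (α : H)⟫ = ⟪z, Tp α⟫ := by
      intro α
      have hα : (α : H) ∈ Tp.closure.domain := Tp.le_closure.1 α.2
      have hval : Tp.closure ⟨(α : H), hα⟩ = Tp α :=
        (Tp.le_closure.2 rfl).symm
      have := h ⟨(α : H), hα⟩
      rw [hval] at this
      rw [← this, real_inner_comm]
    have h2 : z ∈ (Tp†).domain :=
      mem_adjoint_domain_of_exists z ⟨y, hzy⟩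
    exact ⟨h2, adjoint_apply_eq hdom ⟨z, h2⟩ hzy⟩
  · rintro ⟨hx, h2, heq⟩
    refine ⟨hx, fun φ => ?_⟩
    set z := Tp.closure ⟨x, hx⟩ with hz
    have hform : ∀ α : Tp.domain, ⟪z, Tp α⟫ = ⟪y, (α : H)⟫ := by
      intro α
      have := (adjoint_isFormalAdjoint hdom) ⟨z, h2⟩ α
      rw [heq] at this
      rw [← this, real_inner_comm]
    have hcl : IsClosed {q : H × H | ⟪z, q.2⟫ = ⟪y, q.1⟫} := by
      apply isClosed_eq
      · exact (continuous_inner.comp (continuous_const.prodMk continuous_snd))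
      · exact (continuous_inner.comp (continuous_const.prodMk continuous_fst))
    have hsub : (Tp.graph : Set (H × H)) ⊆ {q : H × H | ⟪z, q.2⟫ = ⟪y, q.1⟫} := by
      rintro q hq
      rw [SetLike.mem_coe, LinearPMap.mem_graph_iff] at hq
      obtain ⟨α, h1, hq2⟩ := hq
      simp only [Set.mem_setOf_eq, ← h1, ← hq2]
      exact hform α
    exact closure_minimal hsub hcl (hmemcl φ)
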